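/- arXiv:math/0310216 — 4 statements merged into one kernel-verified Lean document; each statement's English description precedes it below -/
import Mathlib

section
/- Let p and q be coprime positive integers. The rational function ψ_{p,q} ∈ ℚ(s) is odd under inversion, ψ_{p,q}(s^{−1}) = −ψ_{p,q}(s), and it has no pole at s = 1 and its value at s = 1 is 0 (i.e. ψ_{p,q} lies in the local ring of rational functions regular at s = 1, with evaluation 0 there). -/
/-- `Δ_{p,q}(s) = ((s^{pq} − s^{−pq})(s − s^{−1})) / ((s^p − s^{−p})(s^q − s^{−q}))`,
the Alexander polynomial of the `(p,q)` torus knot evaluated at `t = s²`. -/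
noncomputable def torusDelta {F : Type*} [Field F] (p q : ℕ) (s : F) : F :=
  ((s ^ (p * q) - s⁻¹ ^ (p * q)) * (s - s⁻¹)) / ((s ^ p - s⁻¹ ^ p) * (s ^ q - s⁻¹ ^ q))

/-- `φ_{p,q}(s) = (s^p + s^{−p})/(s^p − s^{−p}) − q·(s^{pq} + s^{−pq})/(s^{pq} − s^{−pq})`. -/
noncomputable def torusPhi {F : Type*} [Field F] (p q : ℕ) (s : F) : F :=
  (s ^ p + s⁻¹ ^ p) / (s ^ p - s⁻¹ ^ p) -
    (q : F) * ((s ^ (p * q) + s⁻¹ ^ (p * q)) / (s ^ (p * q) - s⁻¹ ^ (p * q)))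

/-- `ψ_{p,q}(s) = Δ_{p,q}(s)·φ_{p,q}(s)`. -/
noncomputable def torusPsi {F : Type*} [Field F] (p q : ℕ) (s : F) : F :=
  torusDelta p q s * torusPhi p q s

/-- The 2-loop polynomial of the torus knot `T(p,q)`:
`Θ_{p,q}(s₁,s₂,s₃) = −(1/4)·Σ_{(i,j,k)} ψ_{p,q}(s_i)·ψ_{q,p}(s_j)·Δ_{p,q}(s_k)`,
the sum running over all six permutations `(i,j,k)` of `(1,2,3)`. -/
noncomputable def torusTheta {F : Type*} [Field F] (p q : ℕ) (s₁ s₂ s₃ : F) : F :=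
  -(1/4) * (torusPsi p q s₁ * torusPsi q p s₂ * torusDelta p q s₃
    + torusPsi p q s₁ * torusPsi q p s₃ * torusDelta p q s₂
    + torusPsi p q s₂ * torusPsi q p s₁ * torusDelta p q s₃
    + torusPsi p q s₂ * torusPsi q p s₃ * torusDelta p q s₁
    + torusPsi p q s₃ * torusPsi q p s₁ * torusDelta p q s₂
    + torusPsi p q s₃ * torusPsi q p s₂ * torusDelta p q s₁)

/-- The reduced 2-loop polynomial of the torus knot `T(p,q)`:
`Θ̂_{p,q}(s) = ψ_{p,q}(s)·ψ_{q,p}(s) / (2(s − s^{−1})²)`. -/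
noncomputable def torusThetaHat {F : Type*} [Field F] (p q : ℕ) (s : F) : F :=
  torusPsi p q s * torusPsi q p s / (2 * (s - s⁻¹) ^ 2)

open Polynomial

/-! ### Auxiliary lemmas -/

lemma tp_delta_inv {F : Type*} [Field F] (p q : ℕ) (s : F) :
    torusDelta p q s⁻¹ = torusDelta p q s := by
  unfold torusDelta; rw [inv_inv]
  rw [show (s⁻¹^(p*q) - s^(p*q)) * (s⁻¹ - s) = (s^(p*q) - s⁻¹^(p*q)) * (s - s⁻¹) by ring,
      show (s⁻¹^p - s^p) * (s⁻¹^q - s^q) = (s^p - s⁻¹^p) * (s^q - s⁻¹^q) by ring]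

lemma tp_phi_inv {F : Type*} [Field F] (p q : ℕ) (s : F) :
    torusPhi p q s⁻¹ = -torusPhi p q s := by
  unfold torusPhi; rw [inv_inv]
  rw [show s⁻¹^p + s^p = s^p + s⁻¹^p by ring, show s⁻¹^p - s^p = -(s^p - s⁻¹^p) by ring,
      show s⁻¹^(p*q) + s^(p*q) = s^(p*q) + s⁻¹^(p*q) by ring,
      show s⁻¹^(p*q) - s^(p*q) = -(s^(p*q) - s⁻¹^(p*q)) by ring,
      div_neg, div_neg]
  ring

lemma tp_psi_inv {F : Type*} [Field F] (p q : ℕ) (s : F) :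
    torusPsi p q s⁻¹ = -torusPsi p q s := by
  unfold torusPsi; rw [tp_delta_inv, tp_phi_inv, mul_neg]

lemma tp_sub_ne {F : Type*} [Field F] (n : ℕ) (s : F) (hs : s ≠ 0) (h : s^(2*n) - 1 ≠ 0) :
    s^n - s⁻¹^n ≠ 0 := by
  intro h0
  rw [inv_pow, sub_eq_zero] at h0
  have hxn : s^n ≠ 0 := pow_ne_zero n hs
  apply h
  rw [two_mul, pow_add]
  nth_rewrite 1 [h0]
  rw [inv_mul_cancel₀ hxn, sub_self]

lemma tp_delta_frac {F : Type*} [Field F] (p q : ℕ) (s : F) (hs : s ≠ 0)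
    (hp2 : s^(2*p) - 1 ≠ 0) (hq2 : s^(2*q) - 1 ≠ 0) :
    torusDelta p q s =
      ((s^(2*(p*q)) - 1) * (s^2 - 1) * s^(p+q)) /
        ((s^(2*p) - 1) * (s^(2*q) - 1) * s^(p*q+1)) := by
  have hB := tp_sub_ne p s hs hp2
  have hC := tp_sub_ne q s hs hq2
  rw [torusDelta, div_eq_div_iff (mul_ne_zero hB hC)
    (mul_ne_zero (mul_ne_zero hp2 hq2) (pow_ne_zero _ hs))]
  simp only [inv_pow]
  field_simp
  ring

lemma tp_phi_frac {F : Type*} [Field F] (p q : ℕ) (s : F) (hs : s ≠ 0)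
    (hp2 : s^(2*p) - 1 ≠ 0) (hpq2 : s^(2*(p*q)) - 1 ≠ 0) :
    torusPhi p q s =
      ((1 - (q:F)) * (s^(2*p*(q+1)) - 1) + (1 + (q:F)) * (s^(2*(p*q)) - s^(2*p))) /
        ((s^(2*p) - 1) * (s^(2*(p*q)) - 1)) := by
  have hB := tp_sub_ne p s hs hp2
  have hD := tp_sub_ne (p*q) s hs hpq2
  rw [torusPhi, ← mul_div_assoc, div_sub_div _ _ hB hD,
    div_eq_div_iff (mul_ne_zero hB hD) (mul_ne_zero hp2 hpq2)]
  simp only [inv_pow]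
  field_simp
  ring

lemma tp_psi_frac {F : Type*} [Field F] (p q : ℕ) (s : F) (hs : s ≠ 0)
    (hp2 : s^(2*p) - 1 ≠ 0) (hq2 : s^(2*q) - 1 ≠ 0) (hpq2 : s^(2*(p*q)) - 1 ≠ 0) :
    torusPsi p q s =
      ((s^(2*(p*q)) - 1) * (s^2 - 1) * s^(p+q) *
        ((1 - (q:F)) * (s^(2*p*(q+1)) - 1) + (1 + (q:F)) * (s^(2*(p*q)) - s^(2*p)))) /
      ((s^(2*p) - 1)^2 * (s^(2*q) - 1) * (s^(2*(p*q)) - 1) * s^(p*q+1)) := by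
  rw [torusPsi, tp_delta_frac p q s hs hp2 hq2, tp_phi_frac p q s hs hp2 hpq2,
    div_mul_div_comm]
  congr 1
  ring

/-- Geometric sum `1 + X + ⋯ + X^{n-1}`. -/
noncomputable def tpσ (n : ℕ) : ℚ[X] := ∑ i ∈ Finset.range n, X^i

/-- Iterated geometric sum. -/
noncomputable def tpτ (n : ℕ) : ℚ[X] := ∑ i ∈ Finset.range n, tpσ i

lemma tpσ_spec (n : ℕ) : (X:ℚ[X])^n - 1 = (X - 1) * tpσ n := by
  rw [tpσ, mul_comm, geom_sum_mul]

lemma tpσ_eval (n : ℕ) : (tpσ n).eval 1 = n := by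
  simp [tpσ, eval_finset_sum]

lemma tpτ_spec (n : ℕ) : (X:ℚ[X])^n - 1 = (X-1)^2 * tpτ n + (n : ℚ[X]) * (X - 1) := by
  have hn : (n : ℚ[X]) = ∑ _i ∈ Finset.range n, 1 := by simp
  have h1 : tpσ n - (n : ℚ[X]) = (X - 1) * tpτ n := by
    rw [tpτ, Finset.mul_sum, hn, tpσ, ← Finset.sum_sub_distrib]
    exact Finset.sum_congr rfl fun i _ => by rw [← tpσ_spec i]
  linear_combination tpσ_spec n + (X - 1) * h1

lemma tpτ_eval (n : ℕ) : (tpτ n).eval 1 * 2 = n * (n - 1 : ℚ) := by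
  have h0 : (tpτ n).eval 1 = ∑ i ∈ Finset.range n, (i:ℚ) := by
    simp [tpτ, eval_finset_sum, tpσ_eval]
  cases n with
  | zero => simp [h0]
  | succ m =>
    have h := Finset.sum_range_id_mul_two (m+1)
    simp only [Nat.add_sub_cancel] at h
    rw [h0, ← Nat.cast_sum, show ((m+1:ℕ):ℚ) - 1 = (m:ℚ) by push_cast; ring]
    exact_mod_cast congrArg (Nat.cast : ℕ → ℚ) h

lemma tp_pow_sub_one_ne (n : ℕ) (hn : 0 < n) : (X:ℚ[X])^n - 1 ≠ 0 := fun h => by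
  have := congrArg (Polynomial.eval 0) h
  simp [zero_pow hn.ne'] at this

/-- The cofactor polynomial `M` with `N = (X-1)² M`. -/
noncomputable def tpM (p q : ℕ) : ℚ[X] :=
  (1 - (q:ℚ[X])) * tpτ (2*p*(q+1)) + (1 + (q:ℚ[X])) * (tpτ (2*(p*q)) - tpτ (2*p))

lemma tpM_spec (p q : ℕ) :
    (1 - (q:ℚ[X])) * ((X:ℚ[X])^(2*p*(q+1)) - 1) + (1 + (q:ℚ[X])) * (X^(2*(p*q)) - X^(2*p))
      = (X-1)^2 * tpM p q := by
  have hz : (1 - (q:ℚ[X])) * ((2*p*(q+1) : ℕ) : ℚ[X])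
      + (1 + (q:ℚ[X])) * (((2*(p*q) : ℕ) : ℚ[X]) - ((2*p : ℕ) : ℚ[X])) = 0 := by
    push_cast; ring
  rw [tpM]
  linear_combination (1 - (q:ℚ[X])) * tpτ_spec (2*p*(q+1))
    + (1 + (q:ℚ[X])) * (tpτ_spec (2*(p*q)) - tpτ_spec (2*p)) + (X - 1) * hz

lemma tpM_eval (p q : ℕ) : (tpM p q).eval 1 = 0 := by
  have ha := tpτ_eval (2*p*(q+1))
  have hb := tpτ_eval (2*(p*q))
  have hc := tpτ_eval (2*p)
  have h : (tpM p q).eval 1 * 2 = 0 := by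
    simp only [tpM, eval_add, eval_mul, eval_sub, eval_one, eval_natCast]
    push_cast at ha hb hc ⊢
    linear_combination (1 - (q:ℚ)) * ha + (1 + (q:ℚ)) * (hb - hc)
  linarith

/-- Numerator of `ψ_{p,q}` as a regular fraction at `s = 1`. -/
noncomputable def tpf (p q : ℕ) : ℚ[X] := (X + 1) * tpσ (2*(p*q)) * X^(p+q) * tpM p q

/-- Denominator of `ψ_{p,q}` as a regular fraction at `s = 1`. -/
noncomputable def tpg (p q : ℕ) : ℚ[X] := tpσ (2*p)^2 * tpσ (2*q) * tpσ (2*(p*q)) * X^(p*q+1)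

lemma tpf_eval (p q : ℕ) : (tpf p q).eval 1 = 0 := by
  simp [tpf, tpM_eval]

lemma tpg_eval (p q : ℕ) (hp : 0 < p) (hq : 0 < q) : (tpg p q).eval 1 ≠ 0 := by
  have hp' : (p:ℚ) ≠ 0 := Nat.cast_ne_zero.mpr hp.ne'
  have hq' : (q:ℚ) ≠ 0 := Nat.cast_ne_zero.mpr hq.ne'
  have h : (tpg p q).eval 1 = ((2*p:ℕ):ℚ)^2 * ((2*q:ℕ):ℚ) * ((2*(p*q):ℕ):ℚ) := by
    simp [tpg, tpσ_eval]
  rw [h]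
  push_cast
  simp [mul_ne_zero_iff, pow_ne_zero_iff, hp', hq']

lemma tp_cross (p q : ℕ) :
    ((X:ℚ[X])^(2*(p*q)) - 1) * (X^2 - 1) * X^(p+q) *
        ((1 - (q:ℚ[X])) * (X^(2*p*(q+1)) - 1) + (1 + (q:ℚ[X])) * (X^(2*(p*q)) - X^(2*p)))
      * tpg p q
    = tpf p q * ((X^(2*p) - 1)^2 * (X^(2*q) - 1) * (X^(2*(p*q)) - 1) * X^(p*q+1)) := by
  rw [tpM_spec, tpσ_spec (2*(p*q)), tpσ_spec (2*p), tpσ_spec (2*q), tpf, tpg]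
  ring

/-- `ψ_{p,q}` is odd under inversion, `ψ_{p,q}(s⁻¹) = −ψ_{p,q}(s)`; moreover it has no
pole at `s = 1` and vanishes there: it can be written as `f/g` with polynomials `f`, `g`
such that `g(1) ≠ 0` and `f(1) = 0` (i.e. it lies in the local ring of rational functions
regular at `s = 1`, with evaluation `0` there). -/
theorem torusPsi_odd_and_vanishes_at_one (p q : ℕ) (hp : 0 < p) (hq : 0 < q)
    (hpq : Nat.Coprime p q) :
    torusPsi p q ((RatFunc.X : RatFunc ℚ)⁻¹) = -torusPsi p q (RatFunc.X : RatFunc ℚ) ∧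
    ∃ f g : ℚ[X],
      torusPsi p q (RatFunc.X : RatFunc ℚ) =
        algebraMap ℚ[X] (RatFunc ℚ) f / algebraMap ℚ[X] (RatFunc ℚ) g ∧
      g.eval 1 ≠ 0 ∧ f.eval 1 = 0 := by
  refine ⟨tp_psi_inv p q _, tpf p q, tpg p q, ?_, tpg_eval p q hp hq, tpf_eval p q⟩
  have hs : (RatFunc.X : RatFunc ℚ) ≠ 0 := RatFunc.X_ne_zero
  have hXn : ∀ n : ℕ, 0 < n → (RatFunc.X : RatFunc ℚ)^n - 1 ≠ 0 := by
    intro n hn h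
    rw [sub_eq_zero] at h
    have h' : algebraMap ℚ[X] (RatFunc ℚ) ((X:ℚ[X])^n) = algebraMap ℚ[X] (RatFunc ℚ) 1 := by
      rw [map_pow, RatFunc.algebraMap_X, map_one]; exact h
    have h2 := RatFunc.algebraMap_injective ℚ h'
    have := congrArg natDegree h2
    rw [natDegree_X_pow, natDegree_one] at this
    omega
  have hp2 : (RatFunc.X : RatFunc ℚ)^(2*p) - 1 ≠ 0 := hXn _ (by omega)
  have hq2 : (RatFunc.X : RatFunc ℚ)^(2*q) - 1 ≠ 0 := hXn _ (by omega)
  have hpq2 : (RatFunc.X : RatFunc ℚ)^(2*(p*q)) - 1 ≠ 0 := hXn _ (by positivity)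
  rw [tp_psi_frac p q _ hs hp2 hq2 hpq2]
  have hDen : ((X:ℚ[X])^(2*p) - 1)^2 * (X^(2*q) - 1) * (X^(2*(p*q)) - 1) * X^(p*q+1) ≠ 0 := by
    refine mul_ne_zero (mul_ne_zero (mul_ne_zero (pow_ne_zero _ ?_) ?_) ?_)
      (pow_ne_zero _ X_ne_zero)
    · exact tp_pow_sub_one_ne _ (by omega)
    · exact tp_pow_sub_one_ne _ (by omega)
    · exact tp_pow_sub_one_ne _ (by positivity)
  have hgne : tpg p q ≠ 0 := fun h => tpg_eval p q hp hq (by rw [h]; simp)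
  have hDenK := RatFunc.algebraMap_ne_zero hDen
  have hgK := RatFunc.algebraMap_ne_zero hgne
  have hNum : algebraMap ℚ[X] (RatFunc ℚ)
      (((X:ℚ[X])^(2*(p*q)) - 1) * (X^2 - 1) * X^(p+q) *
        ((1 - (q:ℚ[X])) * (X^(2*p*(q+1)) - 1) + (1 + (q:ℚ[X])) * (X^(2*(p*q)) - X^(2*p))))
      = (((RatFunc.X : RatFunc ℚ)^(2*(p*q)) - 1) * (RatFunc.X^2 - 1) * RatFunc.X^(p+q) *
        ((1 - (q:RatFunc ℚ)) * (RatFunc.X^(2*p*(q+1)) - 1)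
          + (1 + (q:RatFunc ℚ)) * (RatFunc.X^(2*(p*q)) - RatFunc.X^(2*p)))) := by
    simp only [map_mul, map_add, map_sub, map_pow, map_one, map_natCast, RatFunc.algebraMap_X]
  have hDenM : algebraMap ℚ[X] (RatFunc ℚ)
      (((X:ℚ[X])^(2*p) - 1)^2 * (X^(2*q) - 1) * (X^(2*(p*q)) - 1) * X^(p*q+1))
      = (((RatFunc.X : RatFunc ℚ)^(2*p) - 1)^2 * (RatFunc.X^(2*q) - 1)
          * (RatFunc.X^(2*(p*q)) - 1) * RatFunc.X^(p*q+1)) := by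
    simp only [map_mul, map_sub, map_pow, map_one, RatFunc.algebraMap_X]
  rw [← hNum, ← hDenM, div_eq_div_iff hDenK hgK, ← map_mul, ← map_mul]
  exact congrArg _ (tp_cross p q)
end

section
/- Let p, q ≥ 2 be coprime integers. The rational function Θ̂_{p,q}(s) = ψ_{p,q}(s)·ψ_{q,p}(s) / (2(s − s^{−1})²) is a Laurent polynomial in t = s² with rational coefficients which is symmetric under t ↦ t^{−1}, and its degree in t (the maximal exponent of t with nonzero coefficient) equals (p−1)(q−1) − 1. -/
-- core polynomial identity
lemma star_id {R : Type*} [CommRing R] (q : ℕ) (hq : 1 ≤ q) (x : R) :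
    (x ^ q - 1) * (x + 1) - (q : R) * ((x ^ q + 1) * (x - 1)) =
    -((x - 1) ^ 3 * ∑ j ∈ Finset.range (q - 1),
        (∑ k ∈ Finset.range (j + 1), x ^ k) * (∑ l ∈ Finset.range (q - 1 - j), x ^ l)) := by
  have key : ∀ j ∈ Finset.range (q - 1),
      (x - 1) ^ 3 * ((∑ k ∈ Finset.range (j + 1), x ^ k) * (∑ l ∈ Finset.range (q - 1 - j), x ^ l))
        = (x - 1) * (x ^ q + 1) - (x - 1) * x ^ (j + 1) - (x - 1) * x ^ (q - 1 - j) := by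
    intro j hj
    rw [Finset.mem_range] at hj
    have h1 := geom_sum_mul x (j + 1)
    have h2 := geom_sum_mul x (q - 1 - j)
    have hpow : x ^ (j + 1) * x ^ (q - 1 - j) = x ^ q := by
      rw [← pow_add]; congr 1; omega
    calc (x - 1) ^ 3 * ((∑ k ∈ Finset.range (j + 1), x ^ k) * (∑ l ∈ Finset.range (q - 1 - j), x ^ l))
        = (x - 1) * (((∑ k ∈ Finset.range (j + 1), x ^ k) * (x - 1)) *
            ((∑ l ∈ Finset.range (q - 1 - j), x ^ l) * (x - 1))) := by ring
      _ = (x - 1) * ((x ^ (j + 1) - 1) * (x ^ (q - 1 - j) - 1)) := by rw [h1, h2]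
      _ = (x - 1) * (x ^ (j + 1) * x ^ (q - 1 - j) - x ^ (j + 1) - x ^ (q - 1 - j) + 1) := by ring
      _ = (x - 1) * (x ^ q - x ^ (j + 1) - x ^ (q - 1 - j) + 1) := by rw [hpow]
      _ = (x - 1) * (x ^ q + 1) - (x - 1) * x ^ (j + 1) - (x - 1) * x ^ (q - 1 - j) := by ring
  rw [Finset.mul_sum, Finset.sum_congr rfl key, Finset.sum_sub_distrib, Finset.sum_sub_distrib,
    Finset.sum_const, Finset.card_range, nsmul_eq_mul, ← Finset.mul_sum, ← Finset.mul_sum]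
  have hS2 : ∑ j ∈ Finset.range (q - 1), x ^ (q - 1 - j) = ∑ j ∈ Finset.range (q - 1), x ^ (j + 1) := by
    rw [← Finset.sum_range_reflect]
    apply Finset.sum_congr rfl
    intro j hj
    rw [Finset.mem_range] at hj
    congr 1; omega
  have hS1 : (x - 1) * ∑ j ∈ Finset.range (q - 1), x ^ (j + 1) = x ^ q - x := by
    have h := geom_sum_mul x (q - 1)
    calc (x - 1) * ∑ j ∈ Finset.range (q - 1), x ^ (j + 1)
        = x * ((∑ k ∈ Finset.range (q - 1), x ^ k) * (x - 1)) := by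
          rw [Finset.mul_sum, Finset.sum_mul, Finset.mul_sum]
          apply Finset.sum_congr rfl; intro j _; ring
      _ = x * (x ^ (q - 1) - 1) := by rw [h]
      _ = x * x ^ (q - 1) - x := by ring
      _ = x ^ q - x := by rw [← pow_succ']; congr 2; omega
  rw [hS2, hS1, Nat.cast_sub hq, Nat.cast_one]
  ring

/-- the building-block polynomial sum -/
noncomputable def torusG {F : Type*} [Field F] (p q : ℕ) (s : F) : F :=
  ∑ j ∈ Finset.range (q - 1),
    (∑ k ∈ Finset.range (j + 1), (s ^ (2 * p)) ^ k) *
    (∑ l ∈ Finset.range (q - 1 - j), (s ^ (2 * p)) ^ l)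

lemma sub_inv_ne_zero {F : Type*} [Field F] {s : F} (hs : s ≠ 0) (n : ℕ)
    (hn : s ^ (2 * n) ≠ 1) : s ^ n - (s ^ n)⁻¹ ≠ 0 := by
  intro h
  apply hn
  have h2 : s ^ n * (s ^ n - (s ^ n)⁻¹) = 0 := by rw [h, mul_zero]
  rw [mul_sub, mul_inv_cancel₀ (pow_ne_zero n hs), ← pow_add, sub_eq_zero] at h2
  rw [two_mul]
  exact h2

lemma psi_eq {F : Type*} [Field F] (p q : ℕ) (hp : 1 ≤ p) (hq : 1 ≤ q) (s : F) (hs : s ≠ 0)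
    (ha : s ^ (2 * p) ≠ 1) (hb : s ^ (2 * q) ≠ 1) (hc : s ^ (2 * (p * q)) ≠ 1) :
    torusPsi p q s = -((s * s - 1) * (s ^ p * s ^ p - 1) * (s ^ p * s ^ q) * torusG p q s) /
      (s * s ^ (p * q) * (s ^ q * s ^ q - 1)) := by
  have hA : s ^ p * s ^ p - 1 ≠ 0 := by
    rw [← pow_add, ← two_mul]; exact sub_ne_zero.mpr ha
  have hB : s ^ q * s ^ q - 1 ≠ 0 := by
    rw [← pow_add, ← two_mul]; exact sub_ne_zero.mpr hb
  have hC : s ^ (p * q) * s ^ (p * q) - 1 ≠ 0 := by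
    rw [← pow_add, ← two_mul]; exact sub_ne_zero.mpr hc
  have hstar := star_id q hq (s ^ (2 * p))
  have hx : (s ^ (2 * p)) ^ q = s ^ (2 * (p * q)) := by rw [← pow_mul]; ring_nf
  rw [hx] at hstar
  unfold torusPsi torusDelta torusPhi torusG
  simp only [inv_pow]
  have hA' : (s ^ p) ^ 2 - 1 ≠ 0 := by rwa [sq]
  have hB' : (s ^ q) ^ 2 - 1 ≠ 0 := by rwa [sq]
  have hC' : (s ^ (p * q)) ^ 2 - 1 ≠ 0 := by rwa [sq]
  field_simp
  linear_combination (s ^ 2 - 1) * hstar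

lemma thetaHat_eq {F : Type*} [Field F] (p q : ℕ) (hp : 1 ≤ p) (hq : 1 ≤ q) (s : F) (hs : s ≠ 0)
    (h2 : (2 : F) ≠ 0) (h1 : s ^ 2 ≠ 1)
    (ha : s ^ (2 * p) ≠ 1) (hb : s ^ (2 * q) ≠ 1) (hc : s ^ (2 * (p * q)) ≠ 1) :
    torusThetaHat p q s =
      s ^ (2 * (p + q)) * torusG p q s * torusG q p s / (2 * s ^ (2 * (p * q))) := by
  have hc' : s ^ (2 * (q * p)) ≠ 1 := by rwa [mul_comm q p]
  have hs1 : s - s⁻¹ ≠ 0 := by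
    have := sub_inv_ne_zero hs 1 (by rwa [mul_one])
    simpa using this
  have hA : s ^ p * s ^ p - 1 ≠ 0 := by
    rw [← pow_add, ← two_mul]; exact sub_ne_zero.mpr ha
  have hB : s ^ q * s ^ q - 1 ≠ 0 := by
    rw [← pow_add, ← two_mul]; exact sub_ne_zero.mpr hb
  have hss : s * s - 1 ≠ 0 := by
    rw [← pow_two]; exact sub_ne_zero.mpr h1
  unfold torusThetaHat
  rw [psi_eq p q hp hq s hs ha hb hc, psi_eq q p hq hp s hs hb ha hc']
  rw [div_mul_div_comm, div_div]
  rw [div_eq_div_iff (by apply_rules [mul_ne_zero, pow_ne_zero, hs, hss, hA, hB, h2, hs1])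
      (by apply_rules [mul_ne_zero, pow_ne_zero, hs, h2])]
  field_simp
  ring

noncomputable def gsT (p m : ℕ) : AddMonoidAlgebra ℚ ℤ :=
  ∑ k ∈ Finset.range m, AddMonoidAlgebra.single ((p : ℤ) * k) (1 : ℚ)

noncomputable def FL (p q : ℕ) : AddMonoidAlgebra ℚ ℤ :=
  ∑ j ∈ Finset.range (q - 1), gsT p (j + 1) * gsT p (q - 1 - j)

noncomputable def cL (p q : ℕ) : AddMonoidAlgebra ℚ ℤ :=
  AddMonoidAlgebra.single ((p : ℤ) + q - p * q) (1/2 : ℚ) * FL p q * FL q p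

-- support bound for sums
lemma sum_bound {ι : Type*} (S : Finset ι) (f : ι → AddMonoidAlgebra ℚ ℤ) (a : ℤ)
    (h : ∀ i ∈ S, ∀ n ∈ (f i).coeff.support, n ≤ a) :
    ∀ n ∈ (∑ i ∈ S, f i).coeff.support, n ≤ a := by
  intro n hn
  by_contra hgt
  push_neg at hgt
  apply Finsupp.mem_support_iff.mp hn
  rw [AddMonoidAlgebra.coeff_sum, Finsupp.finset_sum_apply]
  apply Finset.sum_eq_zero
  intro i hi
  by_contra h0
  exact absurd (h i hi n (Finsupp.mem_support_iff.mpr h0)) (by omega)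

lemma mul_bound (f g : AddMonoidAlgebra ℚ ℤ) (a b : ℤ)
    (hf : ∀ n ∈ f.coeff.support, n ≤ a) (hg : ∀ n ∈ g.coeff.support, n ≤ b) :
    ∀ n ∈ (f * g).coeff.support, n ≤ a + b := by
  intro n hn
  by_contra hgt
  push_neg at hgt
  apply Finsupp.mem_support_iff.mp hn
  rw [AddMonoidAlgebra.coeff_mul]
  apply Finset.sum_eq_zero
  intro x hx
  apply Finset.sum_eq_zero
  intro y hy
  show (if x + y = n then f.coeff x * g.coeff y else 0) = 0
  rw [if_neg]
  have := hf x hx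
  have := hg y hy
  omega

lemma mul_top (f g : AddMonoidAlgebra ℚ ℤ) (a b : ℤ)
    (hf : ∀ n ∈ f.coeff.support, n ≤ a) (hg : ∀ n ∈ g.coeff.support, n ≤ b) :
    (f * g).coeff (a + b) = f.coeff a * g.coeff b := by
  classical
  rw [AddMonoidAlgebra.coeff_mul]
  simp only [Finsupp.sum]
  rw [Finset.sum_eq_single a]
  · simp only [add_right_inj]
    rw [Finset.sum_ite_eq' g.coeff.support b (fun y => f.coeff a * g.coeff y)]
    by_cases hb : b ∈ g.coeff.support
    · rw [if_pos hb]
    · rw [if_neg hb, Finsupp.notMem_support_iff.mp hb, mul_zero]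
  · intro x hx hxa
    apply Finset.sum_eq_zero
    intro y hy
    show (if x + y = a + b then f.coeff x * g.coeff y else 0) = 0
    rw [if_neg]
    have h1 := hf x hx
    have h2 := hg y hy
    have : x ≠ a := hxa
    omega
  · intro ha
    rw [Finsupp.notMem_support_iff.mp ha]
    simp

lemma gsT_bound (p m : ℕ) : ∀ n ∈ (gsT p m).coeff.support, n ≤ (p : ℤ) * (m - 1 : ℕ) := by
  apply sum_bound
  intro k hk n hn
  rw [Finset.mem_range] at hk
  have := Finsupp.support_single_subset hn
  rw [Finset.mem_singleton] at this
  subst this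
  exact mul_le_mul_of_nonneg_left (Nat.cast_le.mpr (by omega : k ≤ m - 1)) (by positivity)

lemma gsT_top (p m : ℕ) (hp : 1 ≤ p) (hm : 1 ≤ m) :
    (gsT p m).coeff ((p : ℤ) * (m - 1 : ℕ)) = 1 := by
  classical
  unfold gsT
  rw [AddMonoidAlgebra.coeff_sum, Finsupp.finset_sum_apply]
  rw [Finset.sum_eq_single (m - 1)]
  · rw [AddMonoidAlgebra.coeff_single, Finsupp.single_apply, if_pos rfl]
  · intro k hk hk'
    rw [Finset.mem_range] at hk
    rw [AddMonoidAlgebra.coeff_single, Finsupp.single_apply, if_neg]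
    intro h
    have hp0 : (p : ℤ) ≠ 0 := Int.natCast_ne_zero.mpr (by omega)
    have := mul_left_cancel₀ hp0 h
    exact hk' (by exact_mod_cast this)
  · intro h
    exact absurd (Finset.mem_range.mpr (by omega)) h

lemma FL_bound (p q : ℕ) : ∀ n ∈ (FL p q).coeff.support, n ≤ (p : ℤ) * (q - 2 : ℕ) := by
  apply sum_bound
  intro j hj n hn
  rw [Finset.mem_range] at hj
  have hb := mul_bound _ _ _ _ (gsT_bound p (j + 1)) (gsT_bound p (q - 1 - j)) n hn
  have he : (p : ℤ) * ((j + 1 - 1 : ℕ)) + (p : ℤ) * ((q - 1 - j - 1 : ℕ)) = (p : ℤ) * ((q - 2 : ℕ)) := by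
    rw [← mul_add]
    congr 1
    push_cast [Nat.add_sub_cancel]
    omega
  omega

lemma FL_top (p q : ℕ) (hp : 1 ≤ p) (hq : 2 ≤ q) :
    (FL p q).coeff ((p : ℤ) * (q - 2 : ℕ)) = ((q - 1 : ℕ) : ℚ) := by
  unfold FL
  rw [AddMonoidAlgebra.coeff_sum, Finsupp.finset_sum_apply]
  rw [Finset.sum_congr rfl (g := fun _ => (1 : ℚ))]
  · rw [Finset.sum_const, Finset.card_range, nsmul_eq_mul, mul_one]
  · intro j hj
    rw [Finset.mem_range] at hj
    have he : (p : ℤ) * ((q - 2 : ℕ)) = (p : ℤ) * ((j + 1 - 1 : ℕ)) + (p : ℤ) * ((q - 1 - j - 1 : ℕ)) := by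
      rw [← mul_add]
      congr 1
      push_cast [Nat.add_sub_cancel]
      omega
    rw [he, mul_top _ _ _ _ (gsT_bound p (j + 1)) (gsT_bound p (q - 1 - j)),
      gsT_top p (j + 1) hp (by omega), gsT_top p (q - 1 - j) hp (by omega), one_mul]

lemma cL_bound (p q : ℕ) (hp : 2 ≤ p) (hq : 2 ≤ q) :
    ∀ n ∈ (cL p q).coeff.support, n ≤ ((p : ℤ) - 1) * ((q : ℤ) - 1) - 1 := by
  intro n hn
  unfold cL at hn
  have h1 : ∀ m ∈ (AddMonoidAlgebra.single ((p : ℤ) + q - p * q) (1/2 : ℚ)).coeff.support,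
      m ≤ (p : ℤ) + q - p * q := by
    intro m hm
    have := Finsupp.support_single_subset hm
    rw [Finset.mem_singleton] at this
    omega
  have h2 := mul_bound _ _ _ _ h1 (FL_bound p q)
  have h3 := mul_bound _ _ _ _ h2 (FL_bound q p) n hn
  have e1 : ((q - 2 : ℕ) : ℤ) = (q : ℤ) - 2 := by omega
  have e2 : ((p - 2 : ℕ) : ℤ) = (p : ℤ) - 2 := by omega
  rw [e1, e2] at h3
  have : (p : ℤ) + q - p * q + ((p : ℤ)) * ((q : ℤ) - 2) + ((q : ℤ)) * ((p : ℤ) - 2)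
      = ((p : ℤ) - 1) * ((q : ℤ) - 1) - 1 := by ring
  linarith

lemma cL_top (p q : ℕ) (hp : 2 ≤ p) (hq : 2 ≤ q) :
    (cL p q).coeff (((p : ℤ) - 1) * ((q : ℤ) - 1) - 1) = ((q - 1 : ℕ) : ℚ) * ((p - 1 : ℕ) : ℚ) / 2 := by
  unfold cL
  have h1 : ∀ m ∈ (AddMonoidAlgebra.single ((p : ℤ) + q - p * q) (1/2 : ℚ)).coeff.support,
      m ≤ (p : ℤ) + q - p * q := by
    intro m hm
    have := Finsupp.support_single_subset hm
    rw [Finset.mem_singleton] at this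
    omega
  have h2 := mul_bound _ _ _ _ h1 (FL_bound p q)
  have he : ((p : ℤ) - 1) * ((q : ℤ) - 1) - 1
      = ((p : ℤ) + q - p * q + (p : ℤ) * ((q - 2 : ℕ))) + (q : ℤ) * ((p - 2 : ℕ)) := by
    have e1 : ((q - 2 : ℕ) : ℤ) = (q : ℤ) - 2 := by omega
    have e2 : ((p - 2 : ℕ) : ℤ) = (p : ℤ) - 2 := by omega
    rw [e1, e2]; ring
  rw [he, mul_top _ _ _ _ h2 (FL_bound q p),
    mul_top _ _ _ _ h1 (FL_bound p q), AddMonoidAlgebra.coeff_single, Finsupp.single_eq_same,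
    FL_top p q (by omega) hq, FL_top q p (by omega) hp]
  ring

noncomputable def negH : ℤ →+ ℤ := AddMonoidHom.mk' (fun n => -n) (fun a b => by ring)

lemma negH_apply (n : ℤ) : negH n = -n := rfl

noncomputable def nmap (f : AddMonoidAlgebra ℚ ℤ) : AddMonoidAlgebra ℚ ℤ :=
  AddMonoidAlgebra.mapDomain negH f

lemma nmap_apply (f : AddMonoidAlgebra ℚ ℤ) (n : ℤ) :
    (nmap f).coeff (-n) = f.coeff n := by
  have h : (-n) = negH n := rfl
  show Finsupp.mapDomain negH f.coeff (negH n) = _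
  rw [Finsupp.mapDomain_apply (fun a b hab => by simpa [negH_apply] using hab) f.coeff n]

lemma nmap_mul (f g : AddMonoidAlgebra ℚ ℤ) : nmap (f * g) = nmap f * nmap g :=
  AddMonoidAlgebra.mapDomain_mul negH f g

lemma nmap_single (a : ℤ) (b : ℚ) :
    nmap (AddMonoidAlgebra.single a b) = AddMonoidAlgebra.single (-a) b := by
  rw [nmap, AddMonoidAlgebra.mapDomain_single, negH_apply]

lemma nmap_sum {ι : Type*} (S : Finset ι) (f : ι → AddMonoidAlgebra ℚ ℤ) :
    nmap (∑ i ∈ S, f i) = ∑ i ∈ S, nmap (f i) := by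
  apply AddMonoidAlgebra.coeff_injective
  simp only [nmap, AddMonoidAlgebra.coeff_mapDomain, AddMonoidAlgebra.coeff_sum]
  exact Finsupp.mapDomain_finset_sum

lemma nmap_gsT (p m : ℕ) (hm : 1 ≤ m) :
    AddMonoidAlgebra.single ((p : ℤ) * (m - 1 : ℕ)) (1 : ℚ) * nmap (gsT p m)
      = gsT p m := by
  unfold gsT
  rw [nmap_sum, Finset.mul_sum]
  have step : ∀ k ∈ Finset.range m,
      AddMonoidAlgebra.single ((p : ℤ) * (m - 1 : ℕ)) (1 : ℚ) *
        nmap (AddMonoidAlgebra.single ((p : ℤ) * k) (1 : ℚ))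
      = AddMonoidAlgebra.single ((p : ℤ) * ((m - 1 - k : ℕ))) (1 : ℚ) := by
    intro k hk
    rw [Finset.mem_range] at hk
    rw [nmap_single, AddMonoidAlgebra.single_mul_single, mul_one]
    congr 1
    have h2 : ((m - 1 - k : ℕ) : ℤ) = ((m - 1 : ℕ) : ℤ) - k := by omega
    rw [h2]; ring
  rw [Finset.sum_congr rfl step]
  exact Finset.sum_range_reflect (fun k => AddMonoidAlgebra.single ((p : ℤ) * k) (1 : ℚ)) m

lemma nmap_FL (p q : ℕ) (hq : 2 ≤ q) :
    AddMonoidAlgebra.single ((p : ℤ) * (q - 2 : ℕ)) (1 : ℚ) * nmap (FL p q) = FL p q := by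
  unfold FL
  rw [nmap_sum, Finset.mul_sum]
  apply Finset.sum_congr rfl
  intro j hj
  rw [Finset.mem_range] at hj
  have hsplit : AddMonoidAlgebra.single ((p : ℤ) * (q - 2 : ℕ)) (1 : ℚ)
      = AddMonoidAlgebra.single ((p : ℤ) * ((j + 1 - 1 : ℕ))) (1 : ℚ) *
        AddMonoidAlgebra.single ((p : ℤ) * ((q - 1 - j - 1 : ℕ))) (1 : ℚ) := by
    rw [AddMonoidAlgebra.single_mul_single, mul_one, ← mul_add]
    congr 2
    omega
  rw [nmap_mul, hsplit]
  calc AddMonoidAlgebra.single ((p : ℤ) * ((j + 1 - 1 : ℕ))) (1 : ℚ) *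
        AddMonoidAlgebra.single ((p : ℤ) * ((q - 1 - j - 1 : ℕ))) (1 : ℚ) *
        (nmap (gsT p (j + 1)) * nmap (gsT p (q - 1 - j)))
      = (AddMonoidAlgebra.single ((p : ℤ) * ((j + 1 - 1 : ℕ))) (1 : ℚ) * nmap (gsT p (j + 1))) *
        (AddMonoidAlgebra.single ((p : ℤ) * ((q - 1 - j - 1 : ℕ))) (1 : ℚ) * nmap (gsT p (q - 1 - j))) := by
        ring
    _ = gsT p (j + 1) * gsT p (q - 1 - j) := by
        rw [nmap_gsT p (j + 1) (by omega), nmap_gsT p (q - 1 - j) (by omega)]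

lemma nmap_cL (p q : ℕ) (hp : 2 ≤ p) (hq : 2 ≤ q) : nmap (cL p q) = cL p q := by
  unfold cL
  rw [nmap_mul, nmap_mul, nmap_single]
  have hinv : ∀ a : ℤ, (AddMonoidAlgebra.single (-a) (1 : ℚ) * AddMonoidAlgebra.single a (1 : ℚ) :
      AddMonoidAlgebra ℚ ℤ) = 1 := by
    intro a
    rw [AddMonoidAlgebra.single_mul_single, neg_add_cancel, mul_one]
    exact AddMonoidAlgebra.one_def.symm
  have h1 : nmap (FL p q) = AddMonoidAlgebra.single (-((p : ℤ) * (q - 2 : ℕ))) (1 : ℚ) * FL p q := by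
    calc nmap (FL p q)
        = (AddMonoidAlgebra.single (-((p : ℤ) * (q - 2 : ℕ))) (1 : ℚ) *
            AddMonoidAlgebra.single (((p : ℤ) * (q - 2 : ℕ))) (1 : ℚ)) * nmap (FL p q) := by
          rw [hinv, one_mul]
      _ = AddMonoidAlgebra.single (-((p : ℤ) * (q - 2 : ℕ))) (1 : ℚ) *
            (AddMonoidAlgebra.single (((p : ℤ) * (q - 2 : ℕ))) (1 : ℚ) * nmap (FL p q)) := by ring
      _ = AddMonoidAlgebra.single (-((p : ℤ) * (q - 2 : ℕ))) (1 : ℚ) * FL p q := by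
          rw [nmap_FL p q hq]
  have h2 : nmap (FL q p) = AddMonoidAlgebra.single (-((q : ℤ) * (p - 2 : ℕ))) (1 : ℚ) * FL q p := by
    calc nmap (FL q p)
        = (AddMonoidAlgebra.single (-((q : ℤ) * (p - 2 : ℕ))) (1 : ℚ) *
            AddMonoidAlgebra.single (((q : ℤ) * (p - 2 : ℕ))) (1 : ℚ)) * nmap (FL q p) := by
          rw [hinv, one_mul]
      _ = AddMonoidAlgebra.single (-((q : ℤ) * (p - 2 : ℕ))) (1 : ℚ) *
            (AddMonoidAlgebra.single (((q : ℤ) * (p - 2 : ℕ))) (1 : ℚ) * nmap (FL q p)) := by ring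
      _ = AddMonoidAlgebra.single (-((q : ℤ) * (p - 2 : ℕ))) (1 : ℚ) * FL q p := by
          rw [nmap_FL q p hp]
  rw [h1, h2]
  have hkey : AddMonoidAlgebra.single (-((p : ℤ) + q - p * q)) (1/2 : ℚ) *
      AddMonoidAlgebra.single (-((p : ℤ) * (q - 2 : ℕ))) (1 : ℚ) *
      AddMonoidAlgebra.single (-((q : ℤ) * (p - 2 : ℕ))) (1 : ℚ)
      = AddMonoidAlgebra.single ((p : ℤ) + q - p * q) (1/2 : ℚ) := by
    rw [AddMonoidAlgebra.single_mul_single, AddMonoidAlgebra.single_mul_single]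
    norm_num
    congr 1
    have e1 : ((q - 2 : ℕ) : ℤ) = (q : ℤ) - 2 := by omega
    have e2 : ((p - 2 : ℕ) : ℤ) = (p : ℤ) - 2 := by omega
    rw [e1, e2]; ring
  calc AddMonoidAlgebra.single (-((p : ℤ) + q - p * q)) (1/2 : ℚ) *
        (AddMonoidAlgebra.single (-((p : ℤ) * (q - 2 : ℕ))) (1 : ℚ) * FL p q) *
        (AddMonoidAlgebra.single (-((q : ℤ) * (p - 2 : ℕ))) (1 : ℚ) * FL q p)
      = (AddMonoidAlgebra.single (-((p : ℤ) + q - p * q)) (1/2 : ℚ) *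
          AddMonoidAlgebra.single (-((p : ℤ) * (q - 2 : ℕ))) (1 : ℚ) *
          AddMonoidAlgebra.single (-((q : ℤ) * (p - 2 : ℕ))) (1 : ℚ)) * (FL p q * FL q p) := by ring
    _ = AddMonoidAlgebra.single ((p : ℤ) + q - p * q) (1/2 : ℚ) * (FL p q * FL q p) := by rw [hkey]
    _ = AddMonoidAlgebra.single ((p : ℤ) + q - p * q) (1/2 : ℚ) * FL p q * FL q p := by ring

lemma cL_symm (p q : ℕ) (hp : 2 ≤ p) (hq : 2 ≤ q) (n : ℤ) : (cL p q).coeff (-n) = (cL p q).coeff n := by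
  conv_lhs => rw [← nmap_cL p q hp hq]
  exact nmap_apply (cL p q) n

lemma ratX_ne_zero : (RatFunc.X : RatFunc ℚ) ≠ 0 := RatFunc.X_ne_zero

lemma ratX_pow_ne_one (n : ℕ) (hn : 1 ≤ n) : (RatFunc.X : RatFunc ℚ) ^ n ≠ 1 := by
  intro h
  have h2 : algebraMap (Polynomial ℚ) (RatFunc ℚ) (Polynomial.X ^ n)
      = algebraMap (Polynomial ℚ) (RatFunc ℚ) 1 := by
    rw [map_pow, map_one, RatFunc.algebraMap_X, h]
  have h3 := RatFunc.algebraMap_injective ℚ h2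
  have h4 := congrArg Polynomial.natDegree h3
  rw [Polynomial.natDegree_X_pow, Polynomial.natDegree_one] at h4
  omega

noncomputable def zsq : RatFunc ℚ := RatFunc.X ^ 2

lemma zsq_ne_zero : zsq ≠ 0 := pow_ne_zero 2 ratX_ne_zero

noncomputable def expHom : Multiplicative ℤ →* RatFunc ℚ where
  toFun n := zsq ^ (Multiplicative.toAdd n)
  map_one' := by simp
  map_mul' a b := by
    simp only [toAdd_mul]
    exact zpow_add₀ zsq_ne_zero _ _

noncomputable def Phi : AddMonoidAlgebra ℚ ℤ →ₐ[ℚ] RatFunc ℚ :=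
  AddMonoidAlgebra.lift ℚ (RatFunc ℚ) ℤ expHom

lemma Phi_single (n : ℤ) (a : ℚ) :
    Phi (AddMonoidAlgebra.single n a) = RatFunc.C a * zsq ^ n := by
  rw [Phi, AddMonoidAlgebra.lift_single]
  rw [Algebra.smul_def, RingHom.ext_rat (algebraMap ℚ (RatFunc ℚ)) RatFunc.C]
  rfl

lemma Phi_apply_sum (f : AddMonoidAlgebra ℚ ℤ) :
    Phi f = f.coeff.sum fun n a => RatFunc.C a * (RatFunc.X : RatFunc ℚ) ^ (2 * n) := by
  rw [Phi, AddMonoidAlgebra.lift_apply']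
  apply Finsupp.sum_congr
  intro n _
  rw [RingHom.ext_rat (algebraMap ℚ (RatFunc ℚ)) RatFunc.C]
  congr 1
  show zsq ^ n = RatFunc.X ^ (2 * n)
  rw [zsq, show ((RatFunc.X : RatFunc ℚ) ^ 2) = RatFunc.X ^ (2 : ℤ) from (zpow_natCast _ 2).symm,
    ← zpow_mul]

lemma Phi_gsT (p m : ℕ) :
    Phi (gsT p m) = ∑ k ∈ Finset.range m, ((RatFunc.X : RatFunc ℚ) ^ (2 * p)) ^ k := by
  rw [gsT, map_sum]
  apply Finset.sum_congr rfl
  intro k _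
  rw [Phi_single, map_one, one_mul]
  rw [show ((p : ℤ) * k) = ((p * k : ℕ) : ℤ) by push_cast; ring, zpow_natCast, zsq,
    ← pow_mul, ← pow_mul, mul_assoc]

lemma Phi_FL (p q : ℕ) : Phi (FL p q) = torusG p q (RatFunc.X : RatFunc ℚ) := by
  rw [FL, map_sum, torusG]
  apply Finset.sum_congr rfl
  intro j _
  rw [map_mul, Phi_gsT, Phi_gsT]

lemma Phi_cL (p q : ℕ) :
    Phi (cL p q) = (RatFunc.X : RatFunc ℚ) ^ (2 * (p + q)) * torusG p q (RatFunc.X : RatFunc ℚ)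
      * torusG q p (RatFunc.X : RatFunc ℚ) / (2 * (RatFunc.X : RatFunc ℚ) ^ (2 * (p * q))) := by
  rw [cL, map_mul, map_mul, Phi_single, Phi_FL, Phi_FL]
  haveI : CharZero (RatFunc ℚ) :=
    charZero_of_injective_algebraMap (algebraMap ℚ (RatFunc ℚ)).injective
  have hne : (2 : RatFunc ℚ) * (RatFunc.X : RatFunc ℚ) ^ (2 * (p * q)) ≠ 0 :=
    mul_ne_zero two_ne_zero (pow_ne_zero _ ratX_ne_zero)
  rw [eq_div_iff hne]
  have hC2 : RatFunc.C (1/2 : ℚ) * 2 = 1 := by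
    rw [show (2 : RatFunc ℚ) = RatFunc.C 2 from (map_ofNat _ 2).symm, ← map_mul]
    norm_num
  have hXX : zsq ^ ((p : ℤ) + q - p * q) * (RatFunc.X : RatFunc ℚ) ^ (2 * (p * q))
      = (RatFunc.X : RatFunc ℚ) ^ (2 * (p + q)) := by
    rw [show (RatFunc.X : RatFunc ℚ) ^ (2 * (p * q)) = zsq ^ ((p * q : ℕ) : ℤ) by
        rw [zpow_natCast, zsq, ← pow_mul],
      ← zpow_add₀ zsq_ne_zero,
      show (p : ℤ) + q - p * q + (p * q : ℕ) = ((p + q : ℕ) : ℤ) by push_cast; ring,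
      zpow_natCast, zsq, ← pow_mul]
  calc RatFunc.C (1/2 : ℚ) * zsq ^ ((p : ℤ) + q - p * q) * torusG p q (RatFunc.X : RatFunc ℚ)
        * torusG q p (RatFunc.X : RatFunc ℚ) * (2 * (RatFunc.X : RatFunc ℚ) ^ (2 * (p * q)))
      = (RatFunc.C (1/2 : ℚ) * 2) * (zsq ^ ((p : ℤ) + q - p * q) *
          (RatFunc.X : RatFunc ℚ) ^ (2 * (p * q))) * torusG p q (RatFunc.X : RatFunc ℚ)
          * torusG q p (RatFunc.X : RatFunc ℚ) := by ring
    _ = _ := by rw [hC2, hXX]; ring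

/-- For coprime integers `p, q ≥ 2`, the reduced 2-loop polynomial
`Θ̂_{p,q}(s) = ψ_{p,q}(s)·ψ_{q,p}(s)/(2(s − s⁻¹)²)` is a Laurent polynomial in `t = s²`
with rational coefficients, symmetric under `t ↦ t⁻¹`, and its degree in `t` (the maximal
exponent of `t` occurring with nonzero coefficient) equals `(p−1)(q−1) − 1`. -/
theorem torusThetaHat_is_symmetric_laurent_of_degree (p q : ℕ) (hp : 2 ≤ p) (hq : 2 ≤ q)
    (hpq : Nat.Coprime p q) :
    ∃ c : ℤ →₀ ℚ,
      torusThetaHat p q (RatFunc.X : RatFunc ℚ) =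
        c.sum (fun n a => RatFunc.C a * (RatFunc.X : RatFunc ℚ) ^ (2 * n)) ∧
      (∀ n : ℤ, c (-n) = c n) ∧
      (∀ n ∈ c.support, n ≤ ((p : ℤ) - 1) * ((q : ℤ) - 1) - 1) ∧
      (((p : ℤ) - 1) * ((q : ℤ) - 1) - 1) ∈ c.support := by
  haveI : CharZero (RatFunc ℚ) :=
    charZero_of_injective_algebraMap (algebraMap ℚ (RatFunc ℚ)).injective
  refine ⟨(cL p q).coeff, ?_, cL_symm p q hp hq, cL_bound p q hp hq, ?_⟩
  · rw [thetaHat_eq p q (by omega) (by omega) _ ratX_ne_zero two_ne_zero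
      (ratX_pow_ne_one 2 (by omega)) (ratX_pow_ne_one (2 * p) (by omega))
      (ratX_pow_ne_one (2 * q) (by omega)) (ratX_pow_ne_one (2 * (p * q)) (by nlinarith))]
    rw [← Phi_cL p q, Phi_apply_sum]
  · rw [Finsupp.mem_support_iff, cL_top p q hp hq]
    apply div_ne_zero _ (by norm_num)
    exact mul_ne_zero (Nat.cast_ne_zero.mpr (by omega)) (Nat.cast_ne_zero.mpr (by omega))
end

section
/- Let p, q ≥ 2 be coprime integers. The rational function Θ̂_{p,q}(s) has no pole at s = 1, and its value at s = 1 (equivalently, the limit as s → 1) equals (1/72)·p·(p² − 1)·q·(q² − 1). (Equivalently, the Vassiliev invariant v₃ of the torus knot T(p,q), which equals half this value, is (1/144)·p·(p² − 1)·q·(q² − 1).) -/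
open Polynomial

/-- Geometric-type sum `∑_{i<m} X^{2i}`. -/
noncomputable def Sgeo (m : ℕ) : ℚ[X] := ∑ i ∈ Finset.range m, X ^ (2*i)

lemma Sgeo_mul (m : ℕ) : Sgeo m * ((X:ℚ[X])^2 - 1) = X^(2*m) - 1 := by
  have := geom_sum_mul ((X:ℚ[X])^2) m
  simpa [Sgeo, ← pow_mul, mul_comm] using this

lemma Sgeo_eval (m : ℕ) : (Sgeo m).eval 1 = m := by
  simp [Sgeo, eval_finset_sum]

lemma sum1 (m : ℕ) : ∑ i ∈ Finset.range m, (2*(i:ℚ)) = m*(m-1) := by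
  induction m with
  | zero => simp
  | succ n ih => rw [Finset.sum_range_succ, ih]; push_cast; ring

lemma sum2 (m : ℕ) : ∑ i ∈ Finset.range m, (2*(i:ℚ))*(2*i-1) = m*(m-1)*(4*m-5)/3 := by
  induction m with
  | zero => simp
  | succ n ih => rw [Finset.sum_range_succ, ih]; push_cast; ring

lemma Sgeo_deriv_eval (m : ℕ) : (derivative (Sgeo m)).eval 1 = (m:ℚ)*(m-1) := by
  rw [Sgeo, derivative_sum, eval_finset_sum, ← sum1]
  refine Finset.sum_congr rfl fun i _ => ?_
  rw [derivative_X_pow]; simp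

lemma Sgeo_deriv2_eval (m : ℕ) :
    (derivative (derivative (Sgeo m))).eval 1 = (m:ℚ)*(m-1)*(4*m-5)/3 := by
  rw [Sgeo, derivative_sum, derivative_sum, eval_finset_sum, ← sum2]
  refine Finset.sum_congr rfl fun i _ => ?_
  rw [derivative_X_pow]
  rcases Nat.eq_zero_or_pos i with h | h
  · subst h; simp
  · rw [derivative_C_mul, derivative_X_pow]
    have h1 : ((2*i-1 : ℕ) : ℚ) = 2*i-1 := by
      push_cast [Nat.cast_sub (by omega : 1 ≤ 2*i)]; ring
    simp [h1]

lemma factor_sq (r : ℚ[X]) (h0 : r.eval 1 = 0) (h1 : (derivative r).eval 1 = 0) :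
    ∃ t : ℚ[X], r = (X - C 1)^2 * t ∧
      t.eval 1 = (derivative (derivative r)).eval 1 / 2 := by
  obtain ⟨s, hs⟩ := (dvd_iff_isRoot.mpr h0)
  have hds : s.eval 1 = 0 := by
    have := congrArg (fun f => eval 1 (derivative f)) hs
    simp only [derivative_mul, derivative_sub, derivative_X, derivative_C, sub_zero,
      eval_add, eval_mul, eval_sub, eval_X, eval_C, eval_one, one_mul] at this
    simpa [h1] using this.symm
  obtain ⟨t, ht⟩ := (dvd_iff_isRoot.mpr hds)
  have hr : r = (X - C 1)^2 * t := by rw [hs, ht]; ring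
  refine ⟨t, hr, ?_⟩
  rw [hr]
  simp only [derivative_mul, derivative_pow, derivative_sub, derivative_X, derivative_C,
    sub_zero, mul_one, eval_add, eval_mul, eval_sub, eval_X, eval_C, eval_pow,
    eval_one, eval_natCast]
  norm_num
  have h2 : eval 1 (derivative (((X:ℚ[X]) - 1) ^ 2)) = 0 := by
    rw [show ((X:ℚ[X]) - 1)^2 = X^2 - 2*X + 1 from by ring]
    norm_num
  rw [h2]; ring

lemma NA_factor (p q : ℕ) (hp : 1 ≤ p) (hq : 2 ≤ q) :
    ∃ t : ℚ[X],
      (((X:ℚ[X])^(p*q))^2 - 1) * ((X^p)^2 + 1)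
          - (q:ℚ[X]) * ((((X:ℚ[X])^(p*q))^2 + 1) * ((X^p)^2 - 1))
        = (X - C 1)^2 * ((X^2 - 1) * t) ∧
      t.eval 1 = 2*(p:ℚ)^3*q*(1-(q:ℚ)^2)/3 := by
  have hle : p ≤ p*q := Nat.le_mul_of_pos_right p (by omega)
  set a := p*q + p with ha
  set b := p*q - p with hb
  have ca : ((a : ℕ) : ℚ) = (p:ℚ)*q + p := by rw [ha]; push_cast; ring
  have cb : ((b : ℕ) : ℚ) = (p:ℚ)*q - p := by rw [hb, Nat.cast_sub hle]; push_cast; ring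
  set P1 : ℚ[X] := (1 - C (q:ℚ)) * Sgeo a + (1 + C (q:ℚ)) * (X^(2*p) * Sgeo b) with hP1
  have key : (((X:ℚ[X])^(p*q))^2 - 1) * ((X^p)^2 + 1)
      - (q:ℚ[X]) * ((((X:ℚ[X])^(p*q))^2 + 1) * ((X^p)^2 - 1)) = (X^2-1) * P1 := by
    have e1 : (X:ℚ[X])^(2*a) = X^(2*(p*q)) * X^(2*p) := by
      rw [← pow_add]; congr 1; omega
    have e2 : (X:ℚ[X])^(2*(p*q)) = X^(2*p) * X^(2*b) := by
      rw [← pow_add]; congr 1; omega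
    have e3 : ((X:ℚ[X])^(p*q))^2 = X^(2*(p*q)) := by rw [← pow_mul]; congr 1; omega
    have e4 : ((X:ℚ[X])^p)^2 = X^(2*p) := by rw [← pow_mul]; congr 1; omega
    have expand : ((X:ℚ[X])^2-1) * P1
        = (1 - C (q:ℚ)) * (Sgeo a * (X^2-1))
          + (1 + C (q:ℚ)) * (X^(2*p) * (Sgeo b * (X^2-1))) := by
      rw [hP1]; ring
    rw [← Polynomial.C_eq_natCast, expand, Sgeo_mul, Sgeo_mul, e1, e3, e4, e2]
    ring
  have ev0 : P1.eval 1 = 0 := by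
    rw [hP1]
    simp only [eval_add, eval_mul, eval_sub, eval_one, eval_C, eval_pow, eval_X,
      Sgeo_eval, one_pow, one_mul]
    rw [ca, cb]; ring
  have ev1 : (derivative P1).eval 1 = 0 := by
    rw [hP1]
    simp only [derivative_add, derivative_mul, derivative_sub, derivative_one,
      derivative_C, zero_sub, zero_add, neg_mul, zero_mul, derivative_X_pow,
      eval_add, eval_mul, eval_sub, eval_neg, eval_one, eval_C, eval_pow, eval_X,
      eval_natCast, eval_zero, derivative_zero, Sgeo_eval, Sgeo_deriv_eval, one_pow,
      one_mul, mul_one]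
    rw [ca, cb]; push_cast; ring
  obtain ⟨t, hfact, hval⟩ := factor_sq P1 ev0 ev1
  refine ⟨t, by rw [key, hfact]; ring, ?_⟩
  rw [hval, hP1]
  simp only [derivative_add, derivative_mul, derivative_sub, derivative_one,
    derivative_C, zero_sub, zero_add, neg_mul, zero_mul, derivative_neg,
    derivative_X_pow, derivative_C_mul,
    eval_add, eval_mul, eval_sub, eval_neg, eval_one, eval_C, eval_pow, eval_X,
    eval_natCast, eval_zero, derivative_zero, Sgeo_eval, Sgeo_deriv_eval,
    Sgeo_deriv2_eval, one_pow, one_mul, mul_one]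
  have c1 : ((2*p-1 : ℕ) : ℚ) = 2*p-1 := by
    push_cast [Nat.cast_sub (by omega : 1 ≤ 2*p)]; ring
  rw [ca, cb, c1]
  push_cast
  ring

lemma psi_key {F : Type*} [Field F] (c u v w t : F) (hu0 : u ≠ 0) (hv0 : v ≠ 0)
    (hw0 : w ≠ 0)
    (hu2 : u^2 - 1 ≠ 0) (hv2 : v^2 - 1 ≠ 0) (hw2 : w^2 - 1 ≠ 0) :
    ((w - w⁻¹) * t / ((u - u⁻¹) * (v - v⁻¹))) *
      ((u + u⁻¹)/(u - u⁻¹) - c * ((w + w⁻¹)/(w - w⁻¹)))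
    = t * u * v * ((w^2-1)*(u^2+1) - c*((w^2+1)*(u^2-1))) /
        (w * ((u^2-1)^2 * (v^2-1))) := by
  have ru : u - u⁻¹ = (u^2-1)/u := by field_simp
  have ru' : u + u⁻¹ = (u^2+1)/u := by field_simp
  have rv : v - v⁻¹ = (v^2-1)/v := by field_simp
  have rw1 : w - w⁻¹ = (w^2-1)/w := by field_simp
  have rw2 : w + w⁻¹ = (w^2+1)/w := by field_simp
  rw [ru, ru', rv, rw1, rw2]
  field_simp

lemma theta_key {F : Type*} [Field F] (p q : ℕ) (s : F) (h2 : (2:F) ≠ 0) (hs : s ≠ 0)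
    (h1 : s - s⁻¹ ≠ 0) (hu2 : (s^p)^2 - 1 ≠ 0) (hv2 : (s^q)^2 - 1 ≠ 0)
    (hw2 : (s^(p*q))^2 - 1 ≠ 0) :
    torusThetaHat p q s =
      (s^p)^2 * (s^q)^2 *
      ((((s^(p*q))^2 - 1)*((s^p)^2+1) - q*(((s^(p*q))^2+1)*((s^p)^2-1))) *
       (((s^(p*q))^2 - 1)*((s^q)^2+1) - p*(((s^(p*q))^2+1)*((s^q)^2-1)))) /
      (2 * (s^(p*q))^2 * (((s^p)^2-1)^3 * ((s^q)^2-1)^3)) := by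
  have hu0 : s^p ≠ 0 := pow_ne_zero _ hs
  have hv0 : s^q ≠ 0 := pow_ne_zero _ hs
  have hw0 : s^(p*q) ≠ 0 := pow_ne_zero _ hs
  unfold torusThetaHat torusPsi torusDelta torusPhi
  rw [mul_comm q p]
  simp only [inv_pow]
  rw [show ((s^(p*q) - (s^(p*q))⁻¹) * (s - s⁻¹) / ((s^p - (s^p)⁻¹) * (s^q - (s^q)⁻¹))) *
      ((s^p + (s^p)⁻¹)/(s^p - (s^p)⁻¹) -
        (q:F) * ((s^(p*q) + (s^(p*q))⁻¹)/(s^(p*q) - (s^(p*q))⁻¹)))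
      = (s - s⁻¹) * s^p * s^q *
          (((s^(p*q))^2-1)*((s^p)^2+1) - q*(((s^(p*q))^2+1)*((s^p)^2-1))) /
          (s^(p*q) * (((s^p)^2-1)^2 * ((s^q)^2-1)))
      from psi_key (q:F) (s^p) (s^q) (s^(p*q)) (s - s⁻¹) hu0 hv0 hw0 hu2 hv2 hw2]
  rw [show ((s^(p*q) - (s^(p*q))⁻¹) * (s - s⁻¹) / ((s^q - (s^q)⁻¹) * (s^p - (s^p)⁻¹))) *
      ((s^q + (s^q)⁻¹)/(s^q - (s^q)⁻¹) -
        (p:F) * ((s^(p*q) + (s^(p*q))⁻¹)/(s^(p*q) - (s^(p*q))⁻¹)))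
      = (s - s⁻¹) * s^q * s^p *
          (((s^(p*q))^2-1)*((s^q)^2+1) - p*(((s^(p*q))^2+1)*((s^q)^2-1))) /
          (s^(p*q) * (((s^q)^2-1)^2 * ((s^p)^2-1)))
      from psi_key (p:F) (s^q) (s^p) (s^(p*q)) (s - s⁻¹) hv0 hu0 hw0 hv2 hu2 hw2]
  generalize (((s^(p*q))^2-1)*((s^p)^2+1) - (q:F)*(((s^(p*q))^2+1)*((s^p)^2-1))) = NA
  generalize (((s^(p*q))^2-1)*((s^q)^2+1) - (p:F)*(((s^(p*q))^2+1)*((s^q)^2-1))) = NB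
  have rs : s - s⁻¹ = (s^2-1)/s := by field_simp
  have hs2 : s^2 - 1 ≠ 0 := by intro h; rw [rs, h, zero_div] at h1; exact h1 rfl
  rw [rs]
  generalize hS : s^2 - 1 = S at hs2
  generalize hU : (s^p)^2 - 1 = U at hu2
  generalize hV : (s^q)^2 - 1 = V at hv2
  field_simp

/-- For coprime integers `p, q ≥ 2`, the reduced 2-loop polynomial `Θ̂_{p,q}(s)` has no
pole at `s = 1`, and its value there equals `(1/72)·p·(p² − 1)·q·(q² − 1)`: it can be
written as `f/g` with polynomials `f, g` such that `g(1) ≠ 0` and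
`f(1)/g(1) = (1/72)·p·(p² − 1)·q·(q² − 1)`.  (Equivalently, the Vassiliev invariant `v₃`
of `T(p,q)`, which is half this value, equals `(1/144)·p·(p² − 1)·q·(q² − 1)`.) -/
theorem torusThetaHat_value_at_one (p q : ℕ) (hp : 2 ≤ p) (hq : 2 ≤ q)
    (hpq : Nat.Coprime p q) :
    ∃ f g : ℚ[X],
      torusThetaHat p q (RatFunc.X : RatFunc ℚ) =
        algebraMap ℚ[X] (RatFunc ℚ) f / algebraMap ℚ[X] (RatFunc ℚ) g ∧
      g.eval 1 ≠ 0 ∧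
      f.eval 1 / g.eval 1 =
        (1/72 : ℚ) * p * ((p : ℚ) ^ 2 - 1) * q * ((q : ℚ) ^ 2 - 1) := by
  clear hpq
  obtain ⟨p', rfl⟩ : ∃ p', p = p' + 2 := ⟨p - 2, by omega⟩
  obtain ⟨q', rfl⟩ : ∃ q', q = q' + 2 := ⟨q - 2, by omega⟩
  clear hp hq
  have hs : (RatFunc.X : RatFunc ℚ) ≠ 0 := RatFunc.X_ne_zero
  have hpow : ∀ n : ℕ, 1 ≤ n → ((RatFunc.X : RatFunc ℚ)^n)^2 - 1 ≠ 0 := by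
    intro n hn h
    have hpoly : (((X : ℚ[X])^n)^2 - 1) ≠ 0 := by
      intro hP
      have h5 := congrArg (Polynomial.eval (2:ℚ)) hP
      simp only [eval_sub, eval_pow, eval_X, eval_one, eval_zero] at h5
      have h6 : (2:ℚ)^1 ≤ 2^n := pow_le_pow_right₀ (by norm_num) hn
      nlinarith [h6]
    apply RatFunc.algebraMap_ne_zero hpoly
    rw [map_sub, map_pow, map_pow, map_one, RatFunc.algebraMap_X]
    exact h
  have h1 : (RatFunc.X : RatFunc ℚ) - (RatFunc.X : RatFunc ℚ)⁻¹ ≠ 0 := by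
    intro h
    apply hpow 1 le_rfl
    have h7 : (RatFunc.X : RatFunc ℚ) * (RatFunc.X - (RatFunc.X : RatFunc ℚ)⁻¹)
        = (RatFunc.X^1)^2 - 1 := by
      field_simp
    rw [← h7, h, mul_zero]
  have h2 : (2 : RatFunc ℚ) ≠ 0 := by
    have hh : ((2:ℚ[X])) ≠ 0 := by norm_num
    have := RatFunc.algebraMap_ne_zero (K := ℚ) hh
    rwa [map_ofNat] at this
  rw [theta_key (p'+2) (q'+2) RatFunc.X h2 hs h1
    (hpow _ (by omega)) (hpow _ (by omega)) (hpow _ (Nat.mul_pos (by omega) (by omega)))]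
  obtain ⟨t, ht, htv⟩ := NA_factor (p'+2) (q'+2) (by omega) (by omega)
  obtain ⟨t', ht', htv'⟩ := NA_factor (q'+2) (p'+2) (by omega) (by omega)
  rw [mul_comm (q'+2) (p'+2)] at ht'
  refine ⟨t * t',
    2 * X^(2*(p'*q'+p'+q')) * (X+1)^4 * (Sgeo (p'+2))^3 * (Sgeo (q'+2))^3, ?_, ?_, ?_⟩
  · have hD : (2:RatFunc ℚ) * (RatFunc.X^((p'+2)*(q'+2)))^2 *
        (((RatFunc.X^(p'+2))^2-1)^3 * (((RatFunc.X:RatFunc ℚ)^(q'+2))^2-1)^3) ≠ 0 :=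
      mul_ne_zero (mul_ne_zero h2 (pow_ne_zero _ (pow_ne_zero _ hs)))
        (mul_ne_zero (pow_ne_zero _ (hpow _ (by omega))) (pow_ne_zero _ (hpow _ (by omega))))
    have hgne : (2 * X^(2*(p'*q'+p'+q')) * (X+1)^4 * (Sgeo (p'+2))^3 * (Sgeo (q'+2))^3
        : ℚ[X]) ≠ 0 := by
      intro h
      have h9 := congrArg (Polynomial.eval (1:ℚ)) h
      simp only [eval_mul, eval_pow, eval_add, eval_X, eval_one, eval_ofNat, one_pow,
        Sgeo_eval, eval_zero] at h9
      have h10 : (0:ℚ) < 2 * 1 * (1+1)^4 * ((p'+2:ℕ):ℚ)^3 * ((q'+2:ℕ):ℚ)^3 := by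
        push_cast; positivity
      rw [h9] at h10
      exact lt_irrefl 0 h10
    have hG := RatFunc.algebraMap_ne_zero hgne
    rw [div_eq_div_iff hD hG]
    have sp : ((X:ℚ[X])^(p'+2))^2 - 1 = Sgeo (p'+2) * (X^2-1) := by
      rw [Sgeo_mul, ← pow_mul, mul_comm (p'+2) 2]
    have sq : ((X:ℚ[X])^(q'+2))^2 - 1 = Sgeo (q'+2) * (X^2-1) := by
      rw [Sgeo_mul, ← pow_mul, mul_comm (q'+2) 2]
    have key2 : ((X:ℚ[X])^(p'+2))^2 * ((X:ℚ[X])^(q'+2))^2 *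
        (((((X:ℚ[X])^((p'+2)*(q'+2)))^2 - 1) * ((X^(p'+2))^2 + 1)
            - ((q'+2:ℕ):ℚ[X]) * ((((X:ℚ[X])^((p'+2)*(q'+2)))^2 + 1) * ((X^(p'+2))^2 - 1))) *
         ((((X:ℚ[X])^((p'+2)*(q'+2)))^2 - 1) * ((X^(q'+2))^2 + 1)
            - ((p'+2:ℕ):ℚ[X]) * ((((X:ℚ[X])^((p'+2)*(q'+2)))^2 + 1) * ((X^(q'+2))^2 - 1)))) *
        (2 * X^(2*(p'*q'+p'+q')) * (X+1)^4 * (Sgeo (p'+2))^3 * (Sgeo (q'+2))^3)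
        = (t * t') * (2 * ((X:ℚ[X])^((p'+2)*(q'+2)))^2 *
            ((((X:ℚ[X])^(p'+2))^2-1)^3 * (((X:ℚ[X])^(q'+2))^2-1)^3)) := by
      rw [ht, ht', sp, sq]
      simp only [C_1]
      ring
    have h11 := congrArg (algebraMap ℚ[X] (RatFunc ℚ)) key2
    simpa only [map_mul, map_pow, map_sub, map_add, map_one, map_ofNat, map_natCast,
      RatFunc.algebraMap_X] using h11
  · simp only [eval_mul, eval_pow, eval_add, eval_X, eval_one, eval_ofNat, one_pow,
      Sgeo_eval]
    push_cast
    positivity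
  · rw [eval_mul, htv, htv']
    simp only [eval_mul, eval_pow, eval_add, eval_X, eval_one, eval_ofNat, one_pow,
      Sgeo_eval]
    have hP : ((p'+2:ℕ):ℚ) ≠ 0 := by push_cast; positivity
    have hQ : ((q'+2:ℕ):ℚ) ≠ 0 := by push_cast; positivity
    field_simp
    ring
end

section
/- Let p ≥ 2 be an integer coprime to 3. In ℚ(s), writing t = s², the following identity holds: Θ̂_{p,3}(s) = ((s^p + s^{−p})/(s³ − s^{−3})³) · ( (p−1)·(s^{3(p+1)} − s^{−3(p+1)}) − (p+1)·(s^{3(p−1)} − s^{−3(p−1)}) ). Equivalently, Θ̂_{p,3}(s) = (t³·(s^p + s^{−p})/(t³ − 1)²)·( (p−1)·(s^{3p} + s^{−3p}) − 2·(s^{3(p−1)} − s^{−3(p−1)})/(s³ − s^{−3}) ). -/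
lemma torus_frac_sub {F : Type*} [Field F] (u : F) (hu : u ≠ 0) :
    u - u⁻¹ = (u^2 - 1)/u := by
  rw [eq_div_iff hu]; field_simp

lemma torus_frac_add {F : Type*} [Field F] (u : F) (hu : u ≠ 0) :
    u + u⁻¹ = (u^2 + 1)/u := by
  rw [eq_div_iff hu]; field_simp

lemma torus_frac_sub2 {F : Type*} [Field F] (u v : F) (hu : u ≠ 0) (hv : v ≠ 0) :
    u * v - u⁻¹ * v⁻¹ = (u^2*v^2 - 1)/(u*v) := by
  rw [eq_div_iff (mul_ne_zero hu hv)]; field_simp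

lemma torus_frac_sub3 {F : Type*} [Field F] (u v : F) (hu : u ≠ 0) (hv : v ≠ 0) :
    u / v - u⁻¹ / v⁻¹ = (u^2 - v^2)/(u*v) := by
  rw [eq_div_iff (mul_ne_zero hu hv)]; field_simp

set_option maxHeartbeats 4000000 in
lemma torus_key1 {F : Type*} [Field F] (x a P : F) (hx : x ≠ 0) (ha : a ≠ 0)
    (h2 : (2:F) ≠ 0) (hx2 : x^2 - 1 ≠ 0)
    (hx6 : x^6 - 1 ≠ 0) (ha2 : a^2 - 1 ≠ 0) (ha6 : a^6 - 1 ≠ 0) :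
    (a ^ 3 - (a ^ 3)⁻¹) * (x - x⁻¹) / ((a - a⁻¹) * (x ^ 3 - (x ^ 3)⁻¹)) *
          ((a + a⁻¹) / (a - a⁻¹) - 3 * ((a ^ 3 + (a ^ 3)⁻¹) / (a ^ 3 - (a ^ 3)⁻¹))) *
        ((a ^ 3 - (a ^ 3)⁻¹) * (x - x⁻¹) / ((x ^ 3 - (x ^ 3)⁻¹) * (a - a⁻¹)) *
          ((x ^ 3 + (x ^ 3)⁻¹) / (x ^ 3 - (x ^ 3)⁻¹) -
            P * ((a ^ 3 + (a ^ 3)⁻¹) / (a ^ 3 - (a ^ 3)⁻¹)))) /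
      (2 * (x - x⁻¹) ^ 2) =
    (a + a⁻¹) / (x ^ 3 - (x ^ 3)⁻¹) ^ 3 *
      ((P - 1) * (a ^ 3 * x ^ 3 - (a ^ 3)⁻¹ * (x ^ 3)⁻¹) -
        (P + 1) * (a ^ 3 / x ^ 3 - (a ^ 3)⁻¹ / (x ^ 3)⁻¹)) := by
  have hx3 : x^3 ≠ 0 := pow_ne_zero _ hx
  have ha3 : a^3 ≠ 0 := pow_ne_zero _ ha
  have e1 : (x^3)^2 - 1 = x^6 - 1 := by ring
  have e2 : (a^3)^2 - 1 = a^6 - 1 := by ring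
  have e3 : (x^3)^2 + 1 = x^6 + 1 := by ring
  have e4 : (a^3)^2 + 1 = a^6 + 1 := by ring
  have e5 : (a^3)^2*(x^3)^2 - 1 = a^6*x^6 - 1 := by ring
  have e6 : (a^3)^2 - (x^3)^2 = a^6 - x^6 := by ring
  rw [torus_frac_sub x hx, torus_frac_sub a ha, torus_frac_sub _ hx3,
    torus_frac_sub _ ha3, torus_frac_add a ha, torus_frac_add _ hx3,
    torus_frac_add _ ha3, torus_frac_sub2 _ _ ha3 hx3, torus_frac_sub3 _ _ ha3 hx3,
    e1, e2, e3, e4, e5, e6]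
  field_simp
  ring

set_option maxHeartbeats 4000000 in
lemma torus_key2 {F : Type*} [Field F] (x a P : F) (hx : x ≠ 0) (ha : a ≠ 0)
    (h2 : (2:F) ≠ 0) (hx2 : x^2 - 1 ≠ 0)
    (hx6 : x^6 - 1 ≠ 0) (ha2 : a^2 - 1 ≠ 0) (ha6 : a^6 - 1 ≠ 0) :
    (a ^ 3 - (a ^ 3)⁻¹) * (x - x⁻¹) / ((a - a⁻¹) * (x ^ 3 - (x ^ 3)⁻¹)) *
          ((a + a⁻¹) / (a - a⁻¹) - 3 * ((a ^ 3 + (a ^ 3)⁻¹) / (a ^ 3 - (a ^ 3)⁻¹))) *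
        ((a ^ 3 - (a ^ 3)⁻¹) * (x - x⁻¹) / ((x ^ 3 - (x ^ 3)⁻¹) * (a - a⁻¹)) *
          ((x ^ 3 + (x ^ 3)⁻¹) / (x ^ 3 - (x ^ 3)⁻¹) -
            P * ((a ^ 3 + (a ^ 3)⁻¹) / (a ^ 3 - (a ^ 3)⁻¹)))) /
      (2 * (x - x⁻¹) ^ 2) =
    (x ^ 2) ^ 3 * (a + a⁻¹) / ((x ^ 2) ^ 3 - 1) ^ 2 *
      ((P - 1) * (a ^ 3 + (a ^ 3)⁻¹) -
        2 * (a ^ 3 / x ^ 3 - (a ^ 3)⁻¹ / (x ^ 3)⁻¹) / (x ^ 3 - (x ^ 3)⁻¹)) := by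
  have hx3 : x^3 ≠ 0 := pow_ne_zero _ hx
  have ha3 : a^3 ≠ 0 := pow_ne_zero _ ha
  have e1 : (x^3)^2 - 1 = x^6 - 1 := by ring
  have e2 : (a^3)^2 - 1 = a^6 - 1 := by ring
  have e3 : (x^3)^2 + 1 = x^6 + 1 := by ring
  have e4 : (a^3)^2 + 1 = a^6 + 1 := by ring
  have e6 : (a^3)^2 - (x^3)^2 = a^6 - x^6 := by ring
  have e7 : (x^2)^3 - 1 = x^6 - 1 := by ring
  rw [torus_frac_sub x hx, torus_frac_sub a ha, torus_frac_sub _ hx3,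
    torus_frac_sub _ ha3, torus_frac_add a ha, torus_frac_add _ hx3,
    torus_frac_add _ ha3, torus_frac_sub3 _ _ ha3 hx3,
    e1, e2, e3, e4, e6, e7]
  field_simp
  ring

open Polynomial in
lemma torus_ratX_pow_ne_one (n : ℕ) (hn : n ≠ 0) :
    (RatFunc.X : RatFunc ℚ) ^ n ≠ 1 := by
  intro h
  have h3 : (Polynomial.X : ℚ[X]) ^ n = 1 := by
    apply RatFunc.algebraMap_injective ℚ
    rw [map_pow, map_one, RatFunc.algebraMap_X]
    exact h
  have := congrArg Polynomial.natDegree h3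
  simp [Polynomial.natDegree_X_pow] at this
  omega

/-- The reduced 2-loop polynomial of the `(p,3)` torus knot, for `p ≥ 2` coprime to `3`.
In `ℚ(s)`, with `t = s²`,
`Θ̂_{p,3}(s) = ((s^p + s^{−p})/(s³ − s^{−3})³)·( (p−1)(s^{3(p+1)} − s^{−3(p+1)})
  − (p+1)(s^{3(p−1)} − s^{−3(p−1)}) )`, equivalently
`Θ̂_{p,3}(s) = (t³(s^p + s^{−p})/(t³ − 1)²)·( (p−1)(s^{3p} + s^{−3p})
  − 2(s^{3(p−1)} − s^{−3(p−1)})/(s³ − s^{−3}) )`. -/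
theorem torusThetaHat_p3_formula (p : ℕ) (hp : 2 ≤ p) (hp3 : Nat.Coprime p 3) :
    ∀ t : RatFunc ℚ, t = (RatFunc.X : RatFunc ℚ) ^ 2 →
      (torusThetaHat p 3 (RatFunc.X : RatFunc ℚ) =
        ((RatFunc.X ^ p + RatFunc.X⁻¹ ^ p) / (RatFunc.X ^ 3 - RatFunc.X⁻¹ ^ 3) ^ 3) *
          (((p : RatFunc ℚ) - 1) *
              (RatFunc.X ^ (3 * (p + 1)) - RatFunc.X⁻¹ ^ (3 * (p + 1))) -
            ((p : RatFunc ℚ) + 1) *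
              (RatFunc.X ^ (3 * (p - 1)) - RatFunc.X⁻¹ ^ (3 * (p - 1))))) ∧
      (torusThetaHat p 3 (RatFunc.X : RatFunc ℚ) =
        (t ^ 3 * (RatFunc.X ^ p + RatFunc.X⁻¹ ^ p) / (t ^ 3 - 1) ^ 2) *
          (((p : RatFunc ℚ) - 1) * (RatFunc.X ^ (3 * p) + RatFunc.X⁻¹ ^ (3 * p)) -
            2 * (RatFunc.X ^ (3 * (p - 1)) - RatFunc.X⁻¹ ^ (3 * (p - 1))) /
              (RatFunc.X ^ 3 - RatFunc.X⁻¹ ^ 3))) := by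
  intro t ht
  subst ht
  have hx : (RatFunc.X : RatFunc ℚ) ≠ 0 := RatFunc.X_ne_zero
  set x : RatFunc ℚ := RatFunc.X with hxdef
  have E1 : ∀ y : RatFunc ℚ, y ^ (p*3) = (y^p)^3 := fun y => by rw [pow_mul]
  have E2 : ∀ y : RatFunc ℚ, y ^ (3*p) = (y^p)^3 := fun y => by rw [mul_comm, pow_mul]
  have E3 : ∀ y : RatFunc ℚ, y ^ (3*(p+1)) = (y^p)^3 * y^3 := fun y => by
    rw [show 3*(p+1) = p*3+3 by ring, pow_add, pow_mul]
  have E4 : ∀ y : RatFunc ℚ, y ≠ 0 → y ^ (3*(p-1)) = (y^p)^3 / y^3 := fun y hy => by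
    rw [eq_div_iff (pow_ne_zero 3 hy), ← pow_add, show 3*(p-1)+3 = p*3 by omega, pow_mul]
  have ha : x^p ≠ 0 := pow_ne_zero p hx
  have h2 : (2 : RatFunc ℚ) ≠ 0 := by
    intro h2
    have h3 : (algebraMap (Polynomial ℚ) (RatFunc ℚ)) 2 =
        (algebraMap (Polynomial ℚ) (RatFunc ℚ)) 0 := by
      rw [map_ofNat, map_zero]; exact h2
    have := RatFunc.algebraMap_injective ℚ h3
    norm_num at this
  have hx2 : x^2 - 1 ≠ 0 := sub_ne_zero.mpr (torus_ratX_pow_ne_one 2 (by norm_num))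
  have hx6 : x^6 - 1 ≠ 0 := sub_ne_zero.mpr (torus_ratX_pow_ne_one 6 (by norm_num))
  have ha2 : (x^p)^2 - 1 ≠ 0 := by
    rw [← pow_mul]; exact sub_ne_zero.mpr (torus_ratX_pow_ne_one (p*2) (by omega))
  have ha6 : (x^p)^6 - 1 ≠ 0 := by
    rw [← pow_mul]; exact sub_ne_zero.mpr (torus_ratX_pow_ne_one (p*6) (by omega))
  constructor
  · simp only [torusThetaHat, torusPsi, torusDelta, torusPhi, E1, E2, E3,
      E4 x hx, E4 x⁻¹ (inv_ne_zero hx), inv_pow, Nat.cast_ofNat]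
    exact torus_key1 x (x^p) (p : RatFunc ℚ) hx ha h2 hx2 hx6 ha2 ha6
  · simp only [torusThetaHat, torusPsi, torusDelta, torusPhi, E1, E2, E3,
      E4 x hx, E4 x⁻¹ (inv_ne_zero hx), inv_pow, Nat.cast_ofNat]
    exact torus_key2 x (x^p) (p : RatFunc ℚ) hx ha h2 hx2 hx6 ha2 ha6
end
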